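/- arXiv:1707.03218 — 5 statements merged into one kernel-verified Lean document; each statement's English description precedes it below -/
import Mathlib

section
/- For any finite alphabet A (with decidable equality), for all tuples a, b ∈ Aⁿ, the reflexive-transitive-symmetric closure of the relation a ∼ b (meaning there exist u ∈ A^{n-1} and two-element subsets I, J of {1,…,n} with a = u∘δ_I and b = u∘δ_J) relates a and b if and only if ofo(a) = ofo(b), where ofo(a) is the list of distinct symbols of a in order of first occurrence. -/
/-- `ofo` maps a string to the subsequence retaining only the first occurrence of each symbol. -/
def ofo {A : Type*} [DecidableEq A] : List A → List A
  | [] => []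
  | a :: l => a :: ofo (l.filter (· ≠ a))
termination_by l => l.length
decreasing_by
  simp only [List.length_cons]
  first
  | exact Nat.lt_succ_of_le (List.length_filter_le _ _)
  | exact Nat.lt_succ_of_le ((List.length_unattach).le.trans ((List.length_filter_le _ _).trans (List.length_attach).le))
  | exact Nat.lt_succ_of_le (by simpa using List.length_filter_le _ l.attach)

/-- For `I = {i, j}` with `i < j` (0-indexed, in `Fin (n+1)`), the map
`δ_I : Fin (n+1) → Fin n`: `m ↦ m` for `m < j`, `j ↦ i`, `m ↦ m - 1` for `m > j`. -/
def deltaMap {n : ℕ} (i j : Fin (n+1)) (hij : (i:ℕ) < j) : Fin (n+1) → Fin n :=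
  fun m =>
    if _ : (m:ℕ) < j then ⟨m, by have := j.isLt; omega⟩
    else if _ : (m:ℕ) = j then ⟨i, by have := j.isLt; omega⟩
    else ⟨(m:ℕ) - 1, by have := m.isLt; omega⟩

set_option maxHeartbeats 1000000

namespace Stmt3Aux

lemma deltaMap_val {n : ℕ} (i j : Fin (n+1)) (hij : (i:ℕ) < j) (m : Fin (n+1)) :
    ((deltaMap i j hij m) : ℕ) =
      if (m:ℕ) < (j:ℕ) then (m:ℕ) else if (m:ℕ) = (j:ℕ) then (i:ℕ) else (m:ℕ) - 1 := by
  unfold deltaMap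
  split_ifs with h1 h2 <;> simp_all

section
set_option linter.unusedSectionVars false
variable {A : Type*} [DecidableEq A]

lemma ofo_nil : ofo ([] : List A) = [] := by rw [ofo]

lemma ofo_cons (a : A) (l : List A) : ofo (a :: l) = a :: ofo (l.filter (· ≠ a)) := by rw [ofo]

theorem mem_ofo : ∀ (l : List A) (x : A), x ∈ ofo l ↔ x ∈ l
  | [], x => by rw [ofo_nil]
  | a :: t, x => by
    rw [ofo_cons]
    simp only [List.mem_cons, mem_ofo (t.filter (· ≠ a)) x, List.mem_filter]
    by_cases h : x = a <;> simp [h]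
termination_by l => l.length
decreasing_by simp only [List.length_cons]; exact Nat.lt_succ_of_le (List.length_filter_le _ _)

theorem ofo_nodup : ∀ (l : List A), (ofo l).Nodup
  | [] => by rw [ofo_nil]; exact List.nodup_nil
  | a :: t => by
    rw [ofo_cons]
    refine List.Nodup.cons ?_ (ofo_nodup _)
    intro hmem
    have := (List.mem_filter.mp ((mem_ofo _ _).mp hmem)).2
    simp at this
termination_by l => l.length
decreasing_by all_goals (simp only [List.length_cons]; exact Nat.lt_succ_of_le (List.length_filter_le _ _))

theorem ofo_dup : ∀ (P : List A) (x : A) (Q : List A), x ∈ P → ofo (P ++ x :: Q) = ofo (P ++ Q)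
  | p :: P', x, Q, hx => by
    rw [List.cons_append, ofo_cons, List.cons_append, ofo_cons, List.filter_append,
      List.filter_append]
    by_cases hxp : x = p
    · subst hxp
      simp
    · have hx' : x ∈ P' := by
        rcases List.mem_cons.mp hx with h | h
        · exact absurd h hxp
        · exact h
      rw [List.filter_cons_of_pos (by simp [hxp])]
      rw [ofo_dup (P'.filter (· ≠ p)) x (Q.filter (· ≠ p))
        (List.mem_filter.mpr ⟨hx', by simp [hxp]⟩)]
termination_by P _ _ _ => P.length
decreasing_by simp only [List.length_cons]; exact Nat.lt_succ_of_le (List.length_filter_le _ _)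

lemma ofo_eq_nil_iff (l : List A) : ofo l = [] ↔ l = [] := by
  cases l with
  | nil => simp [ofo_nil]
  | cons a t => rw [ofo_cons]; simp

/-- `Ins N L`: `L` is obtained from `N` by inserting a copy of an element occurring
strictly earlier. -/
def Ins (N L : List A) : Prop := ∃ P x Q, x ∈ P ∧ N = P ++ Q ∧ L = P ++ x :: Q

lemma Ins.length_eq {N L : List A} (h : Ins N L) : L.length = N.length + 1 := by
  obtain ⟨P, x, Q, _, rfl, rfl⟩ := h
  simp [List.length_append]; omega

lemma Ins.ofo_eq {N L : List A} (h : Ins N L) : ofo L = ofo N := by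
  obtain ⟨P, x, Q, hx, rfl, rfl⟩ := h
  exact ofo_dup P x Q hx

/-- One step of the rewriting relation on lists. -/
def StepL (L M : List A) : Prop := ∃ N, Ins N L ∧ Ins N M

lemma StepL.length_eq {L M : List A} (h : StepL L M) : L.length = M.length := by
  obtain ⟨N, h1, h2⟩ := h; rw [h1.length_eq, h2.length_eq]

lemma StepL.ofo_eq {L M : List A} (h : StepL L M) : ofo L = ofo M := by
  obtain ⟨N, h1, h2⟩ := h; rw [h1.ofo_eq, h2.ofo_eq]

lemma Ins.cons {N L : List A} (x : A) (h : Ins N L) : Ins (x :: N) (x :: L) := by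
  obtain ⟨P, y, Q, hy, rfl, rfl⟩ := h
  exact ⟨x :: P, y, Q, List.mem_cons_of_mem _ hy, rfl, rfl⟩

lemma StepL.cons {L M : List A} (x : A) (h : StepL L M) : StepL (x :: L) (x :: M) := by
  obtain ⟨N, h1, h2⟩ := h; exact ⟨x :: N, h1.cons x, h2.cons x⟩

lemma eqvgen_cons {L M : List A} (x : A) (h : Relation.EqvGen StepL L M) :
    Relation.EqvGen StepL (x :: L) (x :: M) := by
  induction h with
  | rel a b hab => exact .rel _ _ (hab.cons x)
  | refl a => exact .refl _
  | symm a b _ ih => exact .symm _ _ ih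
  | trans a b c _ _ ih1 ih2 => exact .trans _ _ _ ih1 ih2

lemma eqvgen_length {L M : List A} (h : Relation.EqvGen StepL L M) : L.length = M.length := by
  induction h with
  | rel a b hab => exact hab.length_eq
  | refl a => rfl
  | symm a b _ ih => exact ih.symm
  | trans a b c _ _ ih1 ih2 => exact ih1.trans ih2

/-- The canonical list with given `ofo` and length. -/
def canon : List A → ℕ → List A
  | [], _ => []
  | [x], n => List.replicate n x
  | x :: y :: s, n => x :: canon (y :: s) (n - 1)

def dupHead : List A → ℕ
  | [] => 0
  | x :: t => t.count x

lemma steps_canon : ∀ (k : ℕ) (L : List A),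
    L.length ^ 2 + dupHead L ≤ k →
    Relation.EqvGen StepL L (canon (ofo L) L.length) := by
  intro k
  induction k with
  | zero =>
    intro L h
    have hL : L = [] := by
      cases L with
      | nil => rfl
      | cons a t =>
        exfalso
        have h1 : (a :: t).length ^ 2 ≥ 1 := by
          have : 1 ≤ (a :: t).length := by simp
          nlinarith
        omega
    subst hL
    rw [ofo_nil]
    exact .refl _
  | succ k ih =>
    intro L hk
    match L with
    | [] => rw [ofo_nil]; exact .refl _
    | x :: L' =>
      by_cases hx : x ∈ L'
      · by_cases hall : L'.filter (· ≠ x) = []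
        · -- all entries equal x
          have hrep : ∀ y ∈ L', y = x := by
            intro y hy
            by_contra hne
            have : y ∈ L'.filter (· ≠ x) := List.mem_filter.mpr ⟨hy, by simp [hne]⟩
            rw [hall] at this; simp at this
          have hLrep : x :: L' = List.replicate (L'.length + 1) x := by
            rw [List.replicate_succ]
            congr 1
            exact List.eq_replicate_of_mem hrep
          have hofo : ofo (x :: L') = [x] := by
            rw [ofo_cons, hall, ofo_nil]
          rw [hofo]
          show Relation.EqvGen StepL (x :: L') (canon [x] (x :: L').length)
          have : canon [x] (x :: L').length = x :: L' := by
            rw [canon]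
            simp only [List.length_cons]
            exact hLrep.symm
          rw [this]
          exact .refl _
        · -- remove a duplicate x from the tail, append a copy of y at the end
          obtain ⟨S, U, hSU⟩ := List.append_of_mem hx
          set r := ofo (L'.filter (· ≠ x)) with hr
          have hrne : r ≠ [] := by
            rw [hr, Ne, ofo_eq_nil_iff]; exact hall
          set y := r.getLast hrne with hy
          have hofoL : ofo (x :: L') = x :: r := ofo_cons x L'
          have hymem : y ∈ ofo (x :: L') := by
            rw [hofoL]; exact List.mem_cons_of_mem _ (List.getLast_mem hrne)
          have hyx : y ≠ x := by
            intro h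
            have hnd := ofo_nodup (x :: L')
            rw [hofoL] at hnd
            exact (List.nodup_cons.mp hnd).1 (h ▸ List.getLast_mem hrne)
          set N := x :: (S ++ U) with hN
          have hins1 : Ins N (x :: L') := by
            refine ⟨x :: S, x, U, List.mem_cons_self, by rw [hN]; simp, by rw [hSU]; rfl⟩
          have hyN : y ∈ N := by
            have := hins1.ofo_eq
            rw [← mem_ofo, ← this]
            exact hymem
          set M := N ++ [y] with hM
          have hins2 : Ins N M := by
            refine ⟨N, y, [], hyN, by simp, rfl⟩
          have hstep : StepL (x :: L') M := ⟨N, hins1, hins2⟩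
          have hlenM : M.length = (x :: L').length := by
            rw [hM, hN, hSU]; simp [List.length_append]
          have hofoM : ofo M = ofo (x :: L') := hstep.ofo_eq.symm
          have hMform : M = x :: (S ++ U ++ [y]) := by rw [hM, hN]; rfl
          have hcount : dupHead M + 1 = dupHead (x :: L') := by
            rw [hMform]
            show (S ++ U ++ [y]).count x + 1 = L'.count x
            rw [hSU]
            simp [List.count_append, List.count_cons, List.count_singleton, hyx]
            omega
          have hmeas : M.length ^ 2 + dupHead M ≤ k := by
            rw [hlenM]
            omega
          have := ih M hmeas
          rw [hofoM, hlenM] at this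
          exact .trans _ _ _ (.rel _ _ hstep) this
      · -- head does not occur in the tail
        have hfilter : L'.filter (· ≠ x) = L' := by
          apply List.filter_eq_self.mpr
          intro a ha
          simp only [ne_eq, decide_eq_true_eq]
          intro h; exact hx (h ▸ ha)
        have hofo : ofo (x :: L') = x :: ofo L' := by rw [ofo_cons, hfilter]
        by_cases hL' : L' = []
        · subst hL'
          rw [hofo, ofo_nil]
          show Relation.EqvGen StepL [x] (canon [x] 1)
          rw [canon]
          exact .refl _
        · have hL'ne : ofo L' ≠ [] := by rw [Ne, ofo_eq_nil_iff]; exact hL'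
          obtain ⟨w, rest, hwr⟩ : ∃ w rest, ofo L' = w :: rest := by
            cases h : ofo L' with
            | nil => exact absurd h hL'ne
            | cons w rest => exact ⟨w, rest, rfl⟩
          rw [hofo, hwr]
          show Relation.EqvGen StepL (x :: L') (canon (x :: w :: rest) (x :: L').length)
          rw [canon]
          simp only [List.length_cons, Nat.add_sub_cancel]
          rw [← hwr]
          apply eqvgen_cons
          apply ih
          have h1 : dupHead L' ≤ L'.length := by
            cases L' with
            | nil => simp [dupHead]
            | cons z T =>
              show T.count z ≤ (z :: T).length
              have := (List.count_le_length : T.count z ≤ T.length)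
              simp; omega
          have h2 : dupHead (x :: L') = 0 := by
            show L'.count x = 0
            exact List.count_eq_zero.mpr hx
          simp only [List.length_cons] at hk ⊢
          rw [h2] at hk
          have : (L'.length + 1) ^ 2 = L'.length ^ 2 + 2 * L'.length + 1 := by ring
          omega

lemma getElem_index_congr {l : List A} {i j : ℕ} (h : i = j) (hj : j < l.length) :
    l[i]'(h ▸ hj) = l[j]'hj := by subst h; rfl

lemma ofFn_comp_delta {n : ℕ} (w : Fin n → A) (i j : Fin (n+1)) (hij : (i:ℕ) < j) :
    List.ofFn (w ∘ deltaMap i j hij) =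
      (List.ofFn w).take j ++ w ⟨i, by have := j.isLt; omega⟩ :: (List.ofFn w).drop j := by
  have hj : (j:ℕ) ≤ n := Nat.lt_succ_iff.mp j.isLt
  have hi : (i:ℕ) < n := by omega
  apply List.ext_getElem
  · simp [List.length_take]; omega
  · intro m hm hm'
    rw [List.getElem_ofFn]
    have hmn : m < n + 1 := by simpa using hm
    have hval : ((deltaMap i j hij ⟨m, hmn⟩ : Fin n) : ℕ) =
        if m < (j:ℕ) then m else if m = (j:ℕ) then (i:ℕ) else m - 1 := by
      simpa using deltaMap_val i j hij ⟨m, hmn⟩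
    simp only [Function.comp_apply]
    rcases lt_trichotomy m (j:ℕ) with h | h | h
    · have hd : deltaMap i j hij ⟨m, hmn⟩ = ⟨m, by omega⟩ :=
        Fin.ext (by rw [hval, if_pos h])
      rw [hd, List.getElem_append_left (by simp [List.length_take]; omega)]
      simp [List.getElem_take, List.getElem_ofFn]
    · have hd : deltaMap i j hij ⟨m, hmn⟩ = ⟨i, hi⟩ :=
        Fin.ext (by rw [hval, if_neg (by omega), if_pos h])
      rw [hd]
      rw [List.getElem_append_right (by simp [List.length_take]; omega)]
      have hmin : ((j:ℕ) ⊓ n) = (j:ℕ) := min_eq_left hj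
      simp only [List.length_take, List.length_ofFn, hmin]
      simp [show m - (j:ℕ) = 0 from by omega]
    · have hd : deltaMap i j hij ⟨m, hmn⟩ = ⟨m - 1, by omega⟩ :=
        Fin.ext (by rw [hval, if_neg (by omega), if_neg (by omega)])
      rw [hd]
      rw [List.getElem_append_right (by simp [List.length_take]; omega)]
      have hmin : ((j:ℕ) ⊓ n) = (j:ℕ) := min_eq_left hj
      simp only [List.length_take, List.length_ofFn, hmin]
      have h0 : m - (j:ℕ) = (m - (j:ℕ) - 1) + 1 := by omega
      rw [getElem_index_congr h0 (by simp; omega)]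
      simp only [List.getElem_cons_succ, List.getElem_drop, List.getElem_ofFn]
      congr 1
      ext
      simp
      omega

lemma ins_ofFn_delta {n : ℕ} (w : Fin n → A) (i j : Fin (n+1)) (hij : (i:ℕ) < j) :
    Ins (List.ofFn w) (List.ofFn (w ∘ deltaMap i j hij)) := by
  have hj : (j:ℕ) ≤ n := Nat.lt_succ_iff.mp j.isLt
  have hi : (i:ℕ) < n := by omega
  refine ⟨(List.ofFn w).take j, w ⟨i, hi⟩, (List.ofFn w).drop j, ?_, ?_, ?_⟩
  · have : ((List.ofFn w).take (j:ℕ))[(i:ℕ)]'(by simp [List.length_take]; omega) = w ⟨i, hi⟩ := by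
      simp [List.getElem_take, List.getElem_ofFn]
    exact this ▸ List.getElem_mem _
  · rw [List.take_append_drop]
  · exact ofFn_comp_delta w i j hij

lemma exists_delta {n : ℕ} (a : Fin (n+1) → A) (N : List A) (hN : N.length = n)
    (h : Ins N (List.ofFn a)) :
    ∃ (i j : Fin (n+1)) (hij : (i:ℕ) < j),
      a = (fun m : Fin n => N.get ⟨m, by rw [hN]; exact m.isLt⟩) ∘ deltaMap i j hij := by
  obtain ⟨P, x, Q, hx, hNPQ, hL⟩ := h
  have hPlen : P.length + Q.length = n := by
    have := congrArg List.length hNPQ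
    simp at this
    omega
  obtain ⟨iv, hiv, hxi⟩ := List.mem_iff_getElem.mp hx
  have hPn : P.length ≤ n := by omega
  have hivn : iv < n + 1 := by omega
  have hPn1 : P.length < n + 1 := by omega
  have hij' : ((⟨iv, hivn⟩ : Fin (n+1)) : ℕ) < ((⟨P.length, hPn1⟩ : Fin (n+1)) : ℕ) := hiv
  refine ⟨⟨iv, hivn⟩, ⟨P.length, hPn1⟩, hij', ?_⟩
  funext m
  set t : Fin n := deltaMap ⟨iv, hivn⟩ ⟨P.length, hPn1⟩ hij' m with ht
  show a m = N.get ⟨(t:ℕ), by rw [hN]; exact t.isLt⟩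
  have hval : (t:ℕ) = if (m:ℕ) < P.length then (m:ℕ)
      else if (m:ℕ) = P.length then iv else (m:ℕ) - 1 := by
    rw [ht]
    simpa using deltaMap_val ⟨iv, hivn⟩ ⟨P.length, hPn1⟩ hij' m
  have hmlen : (m:ℕ) < (P ++ x :: Q).length := by
    simp only [List.length_append, List.length_cons]
    have := m.isLt; omega
  have ham : a m = (P ++ x :: Q)[(m:ℕ)]'hmlen := by
    have h2 := List.getElem_of_eq hL (l := List.ofFn a)
      (w := by rw [List.length_ofFn]; exact m.isLt)
    rw [← h2, List.getElem_ofFn, Fin.eta]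
  have hgen : ∀ (v : ℕ) (hv : (t:ℕ) = v) (hvlt : v < N.length),
      N.get ⟨(t:ℕ), by rw [hN]; exact t.isLt⟩ = N[v]'hvlt := by
    intro v hv hvlt
    simp only [List.get_eq_getElem]
    exact getElem_index_congr hv hvlt
  rw [ham]
  rcases lt_trichotomy (m:ℕ) P.length with h | h | h
  · have hv : (t:ℕ) = (m:ℕ) := by rw [hval, if_pos h]
    rw [hgen (m:ℕ) hv (by omega)]
    rw [List.getElem_of_eq hNPQ (by omega)]
    rw [List.getElem_append_left h, List.getElem_append_left h]
  · have hv : (t:ℕ) = iv := by rw [hval, if_neg (by omega), if_pos h]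
    rw [hgen iv hv (by omega)]
    rw [List.getElem_of_eq hNPQ (by omega)]
    rw [List.getElem_append_left hiv]
    rw [List.getElem_append_right (le_of_eq h.symm)]
    rw [hxi]
    simp [show (m:ℕ) - P.length = 0 from by omega]
  · have hv : (t:ℕ) = (m:ℕ) - 1 := by rw [hval, if_neg (by omega), if_neg (by omega)]
    have hm1 : (m:ℕ) - 1 < N.length := by rw [hN]; have := m.isLt; omega
    rw [hgen ((m:ℕ) - 1) hv hm1]
    rw [List.getElem_of_eq hNPQ hm1]
    rw [List.getElem_append_right (by omega), List.getElem_append_right (by omega)]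
    have h0 : (m:ℕ) - P.length = ((m:ℕ) - P.length - 1) + 1 := by omega
    have h1 : (m:ℕ) - 1 - P.length = (m:ℕ) - P.length - 1 := by omega
    rw [getElem_index_congr (h0) (by have := m.isLt; simp at hmlen ⊢; omega)]
    rw [getElem_index_congr (h1) (by have := m.isLt; simp at hmlen ⊢; omega)]
    simp only [List.getElem_cons_succ]

/-- The relation on tuples from the theorem statement. -/
def RelT {A : Type*} [DecidableEq A] {n : ℕ} (u v : Fin (n+1) → A) : Prop :=
  ∃ (w : Fin n → A) (i j p q : Fin (n+1)) (hij : (i:ℕ) < j) (hpq : (p:ℕ) < q),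
    u = w ∘ deltaMap i j hij ∧ v = w ∘ deltaMap p q hpq

lemma relT_to_stepL {n : ℕ} {a b : Fin (n+1) → A} (h : RelT a b) :
    StepL (List.ofFn a) (List.ofFn b) := by
  obtain ⟨w, i, j, p, q, hij, hpq, rfl, rfl⟩ := h
  exact ⟨List.ofFn w, ins_ofFn_delta w i j hij, ins_ofFn_delta w p q hpq⟩

lemma stepL_to_relT {n : ℕ} {a b : Fin (n+1) → A}
    (h : StepL (List.ofFn a) (List.ofFn b)) : RelT a b := by
  obtain ⟨N, h1, h2⟩ := h
  have hN : N.length = n := by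
    have := h1.length_eq
    simp at this
    omega
  obtain ⟨i, j, hij, he1⟩ := exists_delta a N hN h1
  obtain ⟨p, q, hpq, he2⟩ := exists_delta b N hN h2
  exact ⟨_, i, j, p, q, hij, hpq, he1, he2⟩

lemma eqvgen_transfer {n : ℕ} {L M : List A} (h : Relation.EqvGen StepL L M) :
    ∀ (a b : Fin (n+1) → A), List.ofFn a = L → List.ofFn b = M →
      Relation.EqvGen (RelT (A := A) (n := n)) a b := by
  induction h with
  | rel L M hLM =>
    intro a b ha hb
    exact .rel _ _ (stepL_to_relT (ha ▸ hb ▸ hLM))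
  | refl L =>
    intro a b ha hb
    have : a = b := List.ofFn_injective (ha.trans hb.symm)
    subst this
    exact .refl _
  | symm L M _ ih =>
    intro a b ha hb
    exact .symm _ _ (ih b a hb ha)
  | trans L M K h1 _ ih1 ih2 =>
    intro a b ha hb
    have hM : M.length = n + 1 := by
      rw [← eqvgen_length h1, ← ha]
      simp
    set c : Fin (n+1) → A := fun m => M.get ⟨m, by rw [hM]; exact m.isLt⟩ with hc
    have hcM : List.ofFn c = M := by
      apply List.ext_getElem
      · simp [hM]
      · intro m hm hm'
        rw [List.getElem_ofFn]
        rfl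
    exact .trans _ _ _ (ih1 a c ha hcM) (ih2 c b hcM hb)

end
end Stmt3Aux

/-- for tuples `a, b ∈ A^{n+1}`, the reflexive-transitive-symmetric closure of the
relation `a ∼ b` (there exist `u ∈ Aⁿ` and 2-element index sets `I = {i,j}`, `J = {p,q}` with
`a = u ∘ δ_I` and `b = u ∘ δ_J`) relates `a` and `b` iff `ofo a = ofo b`. -/
theorem stmt3 {A : Type*} [DecidableEq A] {n : ℕ} (a b : Fin (n+1) → A) :
    Relation.EqvGen
      (fun u v : Fin (n+1) → A =>
        ∃ (w : Fin n → A) (i j p q : Fin (n+1)) (hij : (i:ℕ) < j) (hpq : (p:ℕ) < q),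
          u = w ∘ deltaMap i j hij ∧ v = w ∘ deltaMap p q hpq) a b ↔
    ofo (List.ofFn a) = ofo (List.ofFn b) := by
  open Stmt3Aux in
  constructor
  · intro h
    have h' : Relation.EqvGen (RelT (A := A) (n := n)) a b := h
    clear h
    induction h' with
    | rel u v huv => exact (relT_to_stepL huv).ofo_eq
    | refl u => rfl
    | symm u v _ ih => exact ih.symm
    | trans u v w _ _ ih1 ih2 => exact ih1.trans ih2
  · intro h
    have hsteps : Relation.EqvGen StepL (List.ofFn a) (List.ofFn b) := by
      have h1 := steps_canon ((List.ofFn a).length ^ 2 + dupHead (List.ofFn a))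
        (List.ofFn a) le_rfl
      have h2 := steps_canon ((List.ofFn b).length ^ 2 + dupHead (List.ofFn b))
        (List.ofFn b) le_rfl
      have hlen : (List.ofFn a).length = (List.ofFn b).length := by simp
      rw [h, hlen] at h1
      exact .trans _ _ _ h1 (.symm _ _ h2)
    exact eqvgen_transfer hsteps a b rfl rfl
end

section
/- Every function f : Aⁿ → B that is determined by cs (content and singletons) has a unique identification minor; that is, for all 2-element subsets I, J of {1,…,n}, the identification minors f_I and f_J are similar (f_I = f_J ∘ τ̂ for some permutation τ of {1,…,n-1}). -/
/-- `singles l` is the list of entries of `l` occurring exactly once in `l`,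
in their order of occurrence. -/
def singles {A : Type*} [DecidableEq A] (l : List A) : List A :=
  l.filter (fun a => l.count a = 1)

section Aux

variable {A : Type*}

/-- underlying function of the "slide" permutation sending `p` to `i`. -/
def slideFun {n : ℕ} (i p : Fin n) : Fin n → Fin n := fun m =>
  if _ : (m:ℕ) = p then i
  else if _ : (i:ℕ) ≤ m ∧ (m:ℕ) < p then ⟨(m:ℕ)+1, by have := p.isLt; omega⟩
  else if _ : (p:ℕ) < m ∧ (m:ℕ) ≤ i then ⟨(m:ℕ)-1, by have := m.isLt; omega⟩
  else m

lemma slideFun_mk {n : ℕ} (i p : Fin n) (k : ℕ) (h : k < n) :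
    slideFun i p ⟨k, h⟩ =
      if _ : k = (p:ℕ) then i
      else if _ : (i:ℕ) ≤ k ∧ k < (p:ℕ) then ⟨k+1, by have := p.isLt; omega⟩
      else if _ : (p:ℕ) < k ∧ k ≤ (i:ℕ) then ⟨k-1, by omega⟩
      else ⟨k, h⟩ := rfl

lemma slideFun_inj {n : ℕ} (i p : Fin n) : Function.Injective (slideFun i p) := by
  intro a b hab
  unfold slideFun at hab
  apply Fin.ext
  split_ifs at hab <;> simp only [Fin.ext_iff] at hab ⊢ <;> omega

/-- the "slide" permutation. -/
noncomputable def slide {n : ℕ} (i p : Fin n) : Equiv.Perm (Fin n) :=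
  Equiv.ofBijective _ ((Finite.injective_iff_bijective).1 (slideFun_inj i p))

lemma slide_apply_self {n : ℕ} (i p : Fin n) : slide i p p = i := by
  show slideFun i p p = i
  unfold slideFun
  rw [dif_pos rfl]

lemma deltaMap_mk {n : ℕ} (i j : Fin (n+1)) (hij : (i:ℕ) < j) (k : ℕ) (h : k < n+1) :
    deltaMap i j hij ⟨k, h⟩ =
      if _ : k < (j:ℕ) then ⟨k, by have := j.isLt; omega⟩
      else if _ : k = (j:ℕ) then ⟨i, by have := j.isLt; omega⟩
      else ⟨k - 1, by omega⟩ := rfl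

lemma ofFn_comp_slide {n : ℕ} (a : Fin n → A) (i p : Fin n) :
    List.ofFn (a ∘ ⇑(slide i p)) =
      ((List.ofFn a).eraseIdx (i:ℕ)).insertIdx (p:ℕ) (a i) := by
  have hi := i.isLt
  have hp := p.isLt
  have hlen : ((List.ofFn a).eraseIdx (i:ℕ)).length = n - 1 := by
    simp [List.length_eraseIdx, hi]
  apply List.ext_getElem
  · rw [List.length_ofFn,
      List.length_insertIdx_of_le_length (show (p:ℕ) ≤ ((List.ofFn a).eraseIdx (i:ℕ)).length by omega),
      hlen]
    omega
  · intro k h1 h2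
    have hkn : k < n := by simpa using h1
    rw [List.getElem_ofFn]
    show a (slideFun i p ⟨k, hkn⟩) = _
    rw [slideFun_mk]
    rcases lt_trichotomy k (p:ℕ) with hk | hk | hk
    · rw [List.getElem_insertIdx_of_lt (l := (List.ofFn a).eraseIdx (i:ℕ)) (x := a i) (i := (p:ℕ)) (j := k) hk
        (by omega), List.getElem_eraseIdx]
      split_ifs <;> (try rw [List.getElem_ofFn]) <;>
        first
          | rfl
          | (exfalso; omega)
          | (congr 1; rw [Fin.mk.injEq]; omega)
    · subst hk
      rw [List.getElem_insertIdx_self (l := (List.ofFn a).eraseIdx (i:ℕ)) (x := a i) (i := (p:ℕ)) (by omega)]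
      split_ifs <;> first | rfl | (exfalso; omega)
    · obtain ⟨t, rfl⟩ : ∃ t, k = (p:ℕ) + t + 1 := ⟨k - (p:ℕ) - 1, by omega⟩
      rw [List.getElem_insertIdx_add_succ ((List.ofFn a).eraseIdx (i:ℕ)) (a i) (p:ℕ) t
        (by omega), List.getElem_eraseIdx]
      split_ifs <;> (try rw [List.getElem_ofFn]) <;>
        first
          | rfl
          | (exfalso; omega)
          | (congr 1; rw [Fin.mk.injEq]; omega)

lemma ofFn_comp_delta {n : ℕ} (a : Fin n → A) (i j : Fin (n+1)) (hij : (i:ℕ) < j) :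
    List.ofFn (a ∘ deltaMap i j hij) =
      (List.ofFn a).insertIdx (j:ℕ) (a ⟨i, by have := j.isLt; omega⟩) := by
  have hj := j.isLt
  have hjn : (j:ℕ) ≤ n := by omega
  apply List.ext_getElem
  · rw [List.length_ofFn,
      List.length_insertIdx_of_le_length (show (j:ℕ) ≤ (List.ofFn a).length by simpa using hjn),
      List.length_ofFn]
  · intro k h1 h2
    have hkn : k < n + 1 := by simpa using h1
    rw [List.getElem_ofFn]
    show a (deltaMap i j hij ⟨k, hkn⟩) = _
    rw [deltaMap_mk]
    rcases lt_trichotomy k (j:ℕ) with hk | hk | hk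
    · rw [List.getElem_insertIdx_of_lt (l := List.ofFn a) (i := (j:ℕ)) (j := k) hk
        h2]
      split_ifs <;> (try rw [List.getElem_ofFn]) <;>
        first
          | rfl
          | (exfalso; omega)
          | (congr 1; rw [Fin.mk.injEq]; omega)
    · subst hk
      rw [List.getElem_insertIdx_self (l := List.ofFn a) (i := (j:ℕ)) h2]
      split_ifs <;> first | rfl | (exfalso; omega)
    · obtain ⟨t, rfl⟩ : ∃ t, k = (j:ℕ) + t + 1 := ⟨k - (j:ℕ) - 1, by omega⟩
      rw [List.getElem_insertIdx_add_succ (List.ofFn a) _ (j:ℕ) t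
        (by rw [List.length_ofFn]; omega)]
      split_ifs <;> (try rw [List.getElem_ofFn]) <;>
        first
          | rfl
          | (exfalso; omega)
          | (congr 1; rw [Fin.mk.injEq]; omega)

variable [DecidableEq A]

lemma filter_middle_false (P : A → Bool) (t d : List A) (v : A) (hv : P v = false) :
    (t ++ v :: d).filter P = (t ++ d).filter P := by
  simp [List.filter_append, List.filter_cons, hv]

lemma insertIdx_eq_take_cons_drop (l : List A) (v : A) (k : ℕ) (hk : k ≤ l.length) :
    l.insertIdx k v = l.take k ++ v :: l.drop k := by
  induction l generalizing k with
  | nil =>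
      obtain rfl : k = 0 := by simp only [List.length_nil] at hk; omega
      rfl
  | cons x xs ih =>
    cases k with
    | zero => rfl
    | succ k =>
      simp only [List.insertIdx_succ_cons, List.take_succ_cons, List.drop_succ_cons,
        List.cons_append]
      rw [ih k (by simp only [List.length_cons] at hk; omega)]

lemma filter_insertIdx_false (P : A → Bool) (l : List A) (k : ℕ) (v : A)
    (hk : k ≤ l.length) (hv : P v = false) :
    (l.insertIdx k v).filter P = l.filter P := by
  rw [insertIdx_eq_take_cons_drop l v k hk, filter_middle_false P _ _ v hv,
    List.take_append_drop]

lemma filter_eraseIdx_false (P : A → Bool) (l : List A) (i : ℕ) (hi : i < l.length)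
    (hv : P l[i] = false) :
    l.filter P = (l.eraseIdx i).filter P := by
  conv_lhs => rw [show l = l.take i ++ l.drop i from (List.take_append_drop i l).symm,
    ← List.getElem_cons_drop hi]
  rw [filter_middle_false P _ _ _ hv, ← List.eraseIdx_eq_take_drop_succ]

lemma singles_insertIdx (l : List A) (v : A) (hv : v ∈ l) (k : ℕ) (hk : k ≤ l.length) :
    singles (l.insertIdx k v) = l.filter (fun x => decide (l.count x = 1 ∧ x ≠ v)) := by
  have hperm : (l.insertIdx k v).Perm (v :: l) := List.perm_insertIdx v l hk
  have hcount : ∀ x, (l.insertIdx k v).count x = (v :: l).count x := fun x => hperm.count_eq x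
  have hvpos : 0 < l.count v := List.count_pos_iff.2 hv
  unfold singles
  simp only [hcount]
  rw [filter_insertIdx_false (fun x => decide ((v :: l).count x = 1)) l k v hk (by
    simp only [List.count_cons_self, decide_eq_false_iff_not]
    omega)]
  apply List.filter_congr
  intro x hx
  by_cases hxv : x = v
  · have h1 : (v :: l).count x = l.count v + 1 := by rw [hxv, List.count_cons_self]
    have hne : ¬ (l.count v + 1 = 1) := by omega
    rw [h1, hxv]
    simp [hne]; omega
  · rw [List.count_cons_of_ne (Ne.symm hxv)]
    simp [hxv]

lemma coe_eq_cons_eraseIdx (l : List A) (i : ℕ) (hi : i < l.length) :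
    (↑l : Multiset A) = l[i] ::ₘ ↑(l.eraseIdx i) := by
  rw [Multiset.cons_coe, Multiset.coe_eq_coe, List.eraseIdx_eq_take_drop_succ]
  conv_lhs => rw [show l = l.take i ++ l.drop i from (List.take_append_drop i l).symm,
    ← List.getElem_cons_drop hi]
  exact List.perm_middle

end Aux

/-- every function `f : A^{n+1} → B` determined by content and singletons
(i.e., `f a = f*(ms a, singles a)`) has a unique identification minor: for all 2-element
index sets `I = {i,j}` and `J = {p,q}` there is a permutation `τ` of `Fin n` with
`f_I = f_J ∘ τ̂`, where `f_I(a) = f(a ∘ δ_I)` and `τ̂(a) = a ∘ τ`. -/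
theorem stmt6 {A B : Type*} [DecidableEq A] {n : ℕ} (f : (Fin (n+1) → A) → B)
    (fstar : Multiset A × List A → B)
    (hf : ∀ a : Fin (n+1) → A,
      f a = fstar (↑(List.ofFn a), singles (List.ofFn a))) :
    ∀ (i j p q : Fin (n+1)) (hij : (i:ℕ) < j) (hpq : (p:ℕ) < q),
      ∃ τ : Equiv.Perm (Fin n),
        ∀ a : Fin n → A,
          f (a ∘ deltaMap i j hij) = f ((a ∘ ⇑τ) ∘ deltaMap p q hpq) := by
  intro i j p q hij hpq
  have hj := j.isLt
  have hq := q.isLt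
  set i' : Fin n := ⟨i, by omega⟩ with hi'
  set p' : Fin n := ⟨p, by omega⟩ with hp'
  refine ⟨slide i' p', fun a => ?_⟩
  set l : List A := List.ofFn a with hl
  have hllen : l.length = n := by rw [hl, List.length_ofFn]
  set v : A := a i' with hv
  set b : Fin n → A := a ∘ ⇑(slide i' p') with hb
  have hbp : b p' = v := by
    show a (slide i' p' p') = v
    rw [slide_apply_self]
  -- list computations
  have hL1 : List.ofFn (a ∘ deltaMap i j hij) = l.insertIdx (j:ℕ) v :=
    ofFn_comp_delta a i j hij
  have hofb : List.ofFn b = (l.eraseIdx (i:ℕ)).insertIdx (p:ℕ) v :=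
    ofFn_comp_slide a i' p'
  have hL2 : List.ofFn (b ∘ deltaMap p q hpq) = (List.ofFn b).insertIdx (q:ℕ) v := by
    rw [ofFn_comp_delta b p q hpq,
      show b ⟨(p:ℕ), by omega⟩ = v from hbp]
  -- basic bounds and membership
  have hjl : (j:ℕ) ≤ l.length := by omega
  have hql : (q:ℕ) ≤ (List.ofFn b).length := by rw [List.length_ofFn]; omega
  have hvl : v ∈ l := by rw [hl, hv]; exact List.mem_ofFn.2 ⟨i', rfl⟩
  have hile : (i:ℕ) < l.length := by omega
  have hgeti : l[(i:ℕ)]'hile = v := List.getElem_ofFn (f := a) (i := (i:ℕ)) (by simp only [List.length_ofFn]; omega)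
  have helen : (l.eraseIdx (i:ℕ)).length = n - 1 := by
    rw [List.length_eraseIdx, if_pos hile, hllen]
  have hpe : (p:ℕ) ≤ (l.eraseIdx (i:ℕ)).length := by omega
  -- multiset of ofFn b equals multiset of l
  have hmsb : (↑(List.ofFn b) : Multiset A) = (↑l : Multiset A) := by
    rw [hofb, Multiset.coe_eq_coe.2 (List.perm_insertIdx v _ hpe), ← Multiset.cons_coe,
      coe_eq_cons_eraseIdx l (i:ℕ) hile, hgeti]
  have hvb : v ∈ List.ofFn b := by
    have : v ∈ (↑(List.ofFn b) : Multiset A) := by rw [hmsb]; exact hvl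
    simpa using this
  have hcountb : ∀ x, (List.ofFn b).count x = l.count x := fun x =>
    (Multiset.coe_eq_coe.1 hmsb).count_eq x
  -- multisets agree
  have hms : (↑(List.ofFn (a ∘ deltaMap i j hij)) : Multiset A)
      = ↑(List.ofFn (b ∘ deltaMap p q hpq)) := by
    rw [hL1, hL2, Multiset.coe_eq_coe.2 (List.perm_insertIdx v _ hjl),
      Multiset.coe_eq_coe.2 (List.perm_insertIdx v _ hql), ← Multiset.cons_coe,
      ← Multiset.cons_coe, hmsb]
  -- singles agree
  have hQv : (fun x => decide (l.count x = 1 ∧ x ≠ v)) v = false := by simp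
  have hsingles : singles (List.ofFn (a ∘ deltaMap i j hij))
      = singles (List.ofFn (b ∘ deltaMap p q hpq)) := by
    rw [hL1, hL2, singles_insertIdx l v hvl _ hjl,
      singles_insertIdx (List.ofFn b) v hvb _ hql]
    simp only [hcountb]
    rw [hofb, filter_insertIdx_false _ _ _ v hpe hQv,
      ← filter_eraseIdx_false _ l (i:ℕ) hile (by rw [hgeti]; exact hQv)]
  rw [hf (a ∘ deltaMap i j hij), hf (b ∘ deltaMap p q hpq), hms, hsingles]
end

section
/- If |A| = 2, n ≥ 3, and f : Aⁿ → B is determined by cs, then f is totally symmetric, i.e., f(a∘σ) = f(a) for every permutation σ of {1,…,n} and every a ∈ Aⁿ. -/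
lemma singles_perm {A : Type*} [DecidableEq A] {l₁ l₂ : List A} (h : l₁.Perm l₂) :
    (singles l₁).Perm (singles l₂) := by
  unfold singles
  have he : (fun a => decide (l₁.count a = 1)) = (fun a => decide (l₂.count a = 1)) := by
    funext a; rw [h.count_eq]
  rw [he]
  exact h.filter _

lemma singles_len {A : Type*} [Fintype A] [DecidableEq A] (hA : Fintype.card A = 2)
    {l : List A} (hl : 3 ≤ l.length) : (singles l).length ≤ 1 := by
  by_contra h
  push_neg at h
  rcases hs : singles l with _ | ⟨x, _ | ⟨y, rest⟩⟩ <;> rw [hs] at h <;> simp at h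
  have hx : x ∈ singles l := by rw [hs]; simp
  have hy : y ∈ singles l := by rw [hs]; simp
  unfold singles at hx hy
  rw [List.mem_filter] at hx hy
  have hcx : l.count x = 1 := by simpa using hx.2
  have hcy : l.count y = 1 := by simpa using hy.2
  have hxy : x ≠ y := by
    intro hxyeq
    subst hxyeq
    have : 2 ≤ (singles l).count x := by rw [hs]; simp
    have h2 : (singles l).count x ≤ l.count x :=
      (List.filter_sublist (l := l)).count_le x
    omega
  -- every element of A is x or y
  have hall : ∀ a : A, a = x ∨ a = y := by
    intro a
    have huniv : ({x, y} : Finset A) = Finset.univ := by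
      apply Finset.eq_univ_of_card
      rw [Finset.card_insert_of_notMem (by simpa using hxy), Finset.card_singleton, hA]
    have : a ∈ ({x, y} : Finset A) := by rw [huniv]; exact Finset.mem_univ a
    simpa using this
  have hlen := List.length_eq_countP_add_countP (fun a => decide (a = x)) (l := l)
  have h1 : l.countP (fun a => decide (a = x)) = l.count x := by
    apply List.countP_congr
    intro a _
    simp [beq_iff_eq]
  have h2 : l.countP (fun a => decide (¬ (fun a => decide (a = x)) a = true)) = l.count y := by
    apply List.countP_congr
    intro a _
    rcases hall a with rfl | rfl <;> simp [beq_iff_eq, hxy, hxy.symm]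
  rw [h1, h2] at hlen
  omega

/-- if `|A| = 2`, `n ≥ 3`, and `f : Aⁿ → B` is determined by content and
singletons, then `f` is totally symmetric. -/
theorem stmt8 {A B : Type*} [Fintype A] [DecidableEq A] (hA : Fintype.card A = 2)
    {n : ℕ} (hn : 3 ≤ n) (f : (Fin n → A) → B)
    (fstar : Multiset A × List A → B)
    (hf : ∀ a : Fin n → A, f a = fstar (↑(List.ofFn a), singles (List.ofFn a))) :
    ∀ (σ : Equiv.Perm (Fin n)) (a : Fin n → A), f (a ∘ ⇑σ) = f a := by
  intro σ a
  have hp : (List.ofFn (a ∘ σ)).Perm (List.ofFn a) := σ.ofFn_comp_perm a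
  have hms : (↑(List.ofFn (a ∘ σ)) : Multiset A) = ↑(List.ofFn a) :=
    Quot.sound hp
  have hsp : (singles (List.ofFn (a ∘ σ))).Perm (singles (List.ofFn a)) := singles_perm hp
  have hl1 : (singles (List.ofFn (a ∘ σ))).length ≤ 1 :=
    singles_len hA (by simpa using hn)
  have hseq : singles (List.ofFn (a ∘ σ)) = singles (List.ofFn a) := by
    rcases hx : singles (List.ofFn (a ∘ σ)) with _ | ⟨x, rest⟩
    · rw [hx] at hsp; exact (List.Perm.nil_eq hsp).symm ▸ rfl
    · rw [hx] at hsp hl1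
      simp at hl1
      subst hl1
      rw [List.singleton_perm] at hsp
      exact hsp
  rw [hf, hf, hms, hseq]
end

section
/- Let A = {1,…,k} with k ≥ 3, B contain at least two elements 0,1, and n ≥ k+1. Define f : Aⁿ → B by f(a) = 1 if the multiset of entries of a is {1^{n-k+1}, 2, 3, …, k} and the entries distinct from 1 appear in a in increasing order, and f(a) = 0 otherwise. Then the invariance group of f is trivial: the only permutation σ ∈ Sₙ with f(a∘σ) = f(a) for all a is the identity. -/
/-- `goodTuple k n a` says the content of `a` consists of `n - (k+3) + 1` occurrences of `0`
together with exactly one occurrence of every other element of `Fin (k+3)`, and the entries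
distinct from `0` appear in `a` in increasing order. (Here the alphabet `A = Fin (k+3)`
plays the role of `{1, …, k}` with `k ≥ 3`, the element `0` playing the role of `1`.) -/
def goodTuple (k n : ℕ) (a : Fin n → Fin (k+3)) : Prop :=
  (↑(List.ofFn a) : Multiset (Fin (k+3))) =
      Multiset.replicate (n - (k+3) + 1) 0 + ((Finset.univ : Finset (Fin (k+3))).erase 0).val ∧
    List.Pairwise (· < ·) ((List.ofFn a).filter (· ≠ 0))

lemma sorted_filter_iff {k n : ℕ} (a : Fin n → Fin (k+3)) :
    List.Pairwise (· < ·) ((List.ofFn a).filter (· ≠ 0)) ↔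
      ∀ i j : Fin n, i < j → a i ≠ 0 → a j ≠ 0 → a i < a j := by
  rw [List.pairwise_filter, List.pairwise_ofFn]
  simp

/-- The canonical good tuple with support `S`. -/
noncomputable def stdTuple (k n : ℕ) (S : Finset (Fin n)) (hS : S.card = k+2) :
    Fin n → Fin (k+3) :=
  fun p => if h : p ∈ S then Fin.succ ((S.orderIsoOfFin hS).symm ⟨p, h⟩) else 0

lemma stdTuple_ne_zero {k n : ℕ} {S : Finset (Fin n)} (hS : S.card = k+2) {p : Fin n}
    (hp : p ∈ S) : stdTuple k n S hS p ≠ 0 := by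
  simp only [stdTuple, dif_pos hp]
  exact Fin.succ_ne_zero _

lemma stdTuple_eq_zero {k n : ℕ} {S : Finset (Fin n)} (hS : S.card = k+2) {p : Fin n}
    (hp : p ∉ S) : stdTuple k n S hS p = 0 := by
  simp only [stdTuple, dif_neg hp]

lemma stdTuple_lt {k n : ℕ} {S : Finset (Fin n)} (hS : S.card = k+2) {p q : Fin n}
    (hp : p ∈ S) (hq : q ∈ S) (hpq : p < q) :
    stdTuple k n S hS p < stdTuple k n S hS q := by
  simp only [stdTuple, dif_pos hp, dif_pos hq]
  rw [Fin.succ_lt_succ_iff]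
  rw [OrderIso.lt_iff_lt]
  exact hpq

lemma stdTuple_injOn {k n : ℕ} {S : Finset (Fin n)} (hS : S.card = k+2) {p q : Fin n}
    (hp : p ∈ S) (hq : q ∈ S) (h : stdTuple k n S hS p = stdTuple k n S hS q) : p = q := by
  simp only [stdTuple, dif_pos hp, dif_pos hq] at h
  have := Fin.succ_injective _ h
  have := (S.orderIsoOfFin hS).symm.injective this
  exact Subtype.ext_iff.mp this

lemma stdTuple_good (k n : ℕ) (hn : k + 3 ≤ n) (S : Finset (Fin n)) (hS : S.card = k+2) :
    goodTuple k n (stdTuple k n S hS) := by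
  set a := stdTuple k n S hS with ha
  constructor
  · -- multiset condition
    have hcoe : (↑(List.ofFn a) : Multiset (Fin (k+3))) =
        Multiset.map a (Finset.univ.val : Multiset (Fin n)) := (Fin.univ_val_map a).symm
    have huniv : (Finset.univ : Finset (Fin n)) = S.disjUnion Sᶜ disjoint_compl_right := by
      rw [Finset.disjUnion_eq_union, Finset.union_compl]
    have hsplit : (Finset.univ.val : Multiset (Fin n)) = S.val + Sᶜ.val := by
      rw [huniv]; rfl
    -- the zero part
    have hzero : Multiset.map a Sᶜ.val = Multiset.replicate (n - (k+3) + 1) 0 := by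
      rw [Multiset.eq_replicate]
      constructor
      · rw [Multiset.card_map]
        have : Sᶜ.card = n - (k + 2) := by
          rw [Finset.card_compl, hS, Fintype.card_fin]
        show (Sᶜ.val).card = n - (k+3) + 1
        rw [← Finset.card_def] at *
        rw [this]; omega
      · intro b hb
        rcases Multiset.mem_map.mp hb with ⟨p, hp, rfl⟩
        exact stdTuple_eq_zero hS (by simpa using hp)
    -- the nonzero part
    have hinj : ∀ p ∈ S.val, ∀ q ∈ S.val, a p = a q → p = q := by
      intro p hp q hq h
      exact stdTuple_injOn hS (by simpa using hp) (by simpa using hq) h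
    have hnodup : (Multiset.map a S.val).Nodup := Multiset.Nodup.map_on hinj S.nodup
    have himage : S.image a = (Finset.univ : Finset (Fin (k+3))).erase 0 := by
      apply Finset.eq_of_subset_of_card_le
      · intro b hb
        rcases Finset.mem_image.mp hb with ⟨p, hp, rfl⟩
        exact Finset.mem_erase.mpr ⟨stdTuple_ne_zero hS hp, Finset.mem_univ _⟩
      · rw [Finset.card_erase_of_mem (Finset.mem_univ _), Finset.card_univ, Fintype.card_fin,
          Finset.card_image_of_injOn (fun p hp q hq => stdTuple_injOn hS hp hq), hS]
        omega
    have hmapS : Multiset.map a S.val = ((Finset.univ : Finset (Fin (k+3))).erase 0).val := by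
      rw [← himage, Finset.image_val, Multiset.dedup_eq_self.mpr hnodup]
    rw [hcoe, hsplit, Multiset.map_add, hzero, hmapS]
    exact add_comm _ _
  · -- sortedness
    rw [sorted_filter_iff]
    intro i j hij hi hj
    have hiS : i ∈ S := by
      by_contra h; exact hi (stdTuple_eq_zero hS h)
    have hjS : j ∈ S := by
      by_contra h; exact hj (stdTuple_eq_zero hS h)
    exact stdTuple_lt hS hiS hjS hij

/-- for `|A| = k + 3 ≥ 3`, `n ≥ (k+3) + 1`, and `b0 ≠ b1` in `B`, the function
`f : Aⁿ → B` taking value `b1` exactly on the good tuples and `b0` elsewhere has trivial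
invariance group: the only `σ ∈ Sₙ` with `f(a ∘ σ) = f(a)` for all `a` is the identity. -/
theorem stmt10 {B : Type*} (k n : ℕ) (hn : k + 4 ≤ n) (b0 b1 : B) (hb : b0 ≠ b1)
    (f : (Fin n → Fin (k+3)) → B)
    (hf : ∀ a : Fin n → Fin (k+3),
      (goodTuple k n a → f a = b1) ∧ (¬ goodTuple k n a → f a = b0)) :
    ∀ σ : Equiv.Perm (Fin n), (∀ a, f (a ∘ ⇑σ) = f a) → σ = 1 := by
  intro σ hσ
  have hgood : ∀ a, goodTuple k n a → goodTuple k n (a ∘ ⇑σ) := by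
    intro a ha
    by_contra hcon
    have h1 := (hf a).1 ha
    have h2 := (hf (a ∘ ⇑σ)).2 hcon
    rw [hσ a] at h2
    exact hb (h2.symm.trans h1)
  have hmono : StrictMono ⇑σ := by
    intro i j hij
    rcases lt_trichotomy (σ i) (σ j) with h | h | h
    · exact h
    · exact absurd (σ.injective h) hij.ne
    · exfalso
      obtain ⟨S, hsub, hcard⟩ :=
        Finset.exists_superset_card_eq (s := ({σ i, σ j} : Finset (Fin n))) (n := k+2)
          (le_trans (Finset.card_insert_le _ _) (by rw [Finset.card_singleton]; omega))
          (by rw [Fintype.card_fin]; omega)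
      have hga := stdTuple_good k n (by omega) S hcard
      have hg2 := hgood _ hga
      have hsort := (sorted_filter_iff (stdTuple k n S hcard ∘ ⇑σ)).mp hg2.2
      have hiS : σ i ∈ S := hsub (by simp)
      have hjS : σ j ∈ S := hsub (by simp)
      have h1 : stdTuple k n S hcard (σ i) < stdTuple k n S hcard (σ j) :=
        hsort i j hij (stdTuple_ne_zero hcard hiS) (stdTuple_ne_zero hcard hjS)
      have h2 : stdTuple k n S hcard (σ j) < stdTuple k n S hcard (σ i) :=
        stdTuple_lt hcard hjS hiS h
      exact absurd h1 (not_lt.mpr h2.le)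
  have hinvmono : StrictMono ⇑σ⁻¹ := by
    intro x y hxy
    rw [← hmono.lt_iff_lt]
    simpa using hxy
  haveI : WellFoundedLT (Fin n) := inferInstance
  refine Equiv.ext fun i => ?_
  have h1 : i ≤ σ i := hmono.le_apply
  have h2 : σ i ≤ i := by
    have := hinvmono.le_apply (x := σ i)
    simpa using this
  simpa using le_antisymm h2 h1
end

section
/- Let 3 ≤ ℓ ≤ n-1 and let σ ∈ Sₙ be the direct sum of descending permutations ι_m ⊕ ι_{n-m} for some 0 ≤ m ≤ n-1 (i.e., σ reverses {1,…,m} and reverses {m+1,…,n} within themselves, σ(i) = m+1-i for i ≤ m and σ(i) = n + m + 1 - i for i > m). Then ⟨Δ Pat^ℓ(σ)⟩ ∩ Pat^ℓ(σ) = ∅, i.e., σ is ℓ-differentiating. -/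
/-- The pattern `σ_S = h_{σ(S)}⁻¹ ∘ σ|_S ∘ h_S` of `σ` on `S`, as a permutation of `Fin k`,
where `h_T : Fin |T| ≃o T` is the order-isomorphism. -/
def patPermE {n k : ℕ} (σ : Equiv.Perm (Fin n)) (S : Finset (Fin n)) (h : S.card = k) :
    Equiv.Perm (Fin k) :=
  ((S.orderIsoOfFin h).toEquiv.trans
    (({ toFun := fun x => ⟨σ x, Finset.mem_image_of_mem _ x.2⟩
        invFun := fun y => ⟨σ.symm y, by
          obtain ⟨x, hx, hxy⟩ := Finset.mem_image.mp y.2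
          rw [← hxy, Equiv.symm_apply_apply]; exact hx⟩
        left_inv := fun x => Subtype.ext (σ.symm_apply_apply x)
        right_inv := fun y => Subtype.ext (σ.apply_symm_apply y) } :
      {x // x ∈ S} ≃ {y // y ∈ S.image ⇑σ}))).trans
    ((S.image ⇑σ).orderIsoOfFin
      (by rw [Finset.card_image_of_injective S σ.injective, h])).toEquiv.symm

/-- `Pat^k(σ)`: the set of all `k`-patterns of `σ`. -/
def PatSet {n : ℕ} (k : ℕ) (σ : Equiv.Perm (Fin n)) : Set (Equiv.Perm (Fin k)) :=
  {τ | ∃ (S : Finset (Fin n)) (h : S.card = k), τ = patPermE σ S h}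

/-- `ΔT = {x⁻¹ * y : x, y ∈ T}`. -/
def deltaSet {G : Type*} [Group G] (T : Set G) : Set G :=
  {g | ∃ x ∈ T, ∃ y ∈ T, g = x⁻¹ * y}

lemma count_lower {k : ℕ} (Q : Fin k → Prop) [DecidablePred Q]
    (hQ : ∀ {i j : Fin k}, i ≤ j → Q j → Q i) (i : Fin k) :
    Q i ↔ (i : ℕ) < (Finset.univ.filter Q).card := by
  constructor
  · intro hi
    have hsub : Finset.Iic i ⊆ Finset.univ.filter Q := fun j hj =>
      Finset.mem_filter.mpr ⟨Finset.mem_univ _, hQ (Finset.mem_Iic.mp hj) hi⟩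
    have := Finset.card_le_card hsub
    rw [Fin.card_Iic] at this
    omega
  · intro hi
    by_contra hQi
    have hsub : Finset.univ.filter Q ⊆ Finset.Iio i := by
      intro j hj
      rcases Finset.mem_filter.mp hj with ⟨-, hQj⟩
      rw [Finset.mem_Iio]
      by_contra hij
      exact hQi (hQ (le_of_not_gt hij) hQj)
    have := Finset.card_le_card hsub
    rw [Fin.card_Iio] at this
    omega

lemma pat_formula {n ℓ m : ℕ} (hℓ : 0 < ℓ) (hmn : m < n)
    (σ : Equiv.Perm (Fin n))
    (hσ : ∀ i : Fin n,
      (σ i : ℕ) = if (i : ℕ) < m then m - 1 - (i : ℕ) else n + m - 1 - (i : ℕ))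
    (S : Finset (Fin n)) (h : S.card = ℓ) :
    ∃ p ≤ ℓ, ∀ i : Fin ℓ, ((patPermE σ S h i : Fin ℓ) : ℕ) =
      if (i : ℕ) < p then p - 1 - (i : ℕ) else ℓ + p - 1 - (i : ℕ) := by
  set e := S.orderEmbOfFin h with he
  -- facts about σ
  have hσlt : ∀ x : Fin n, (x : ℕ) < m → (σ x : ℕ) = m - 1 - (x : ℕ) ∧ (σ x : ℕ) < m := by
    intro x hx
    have := hσ x
    rw [if_pos hx] at this
    exact ⟨this, by omega⟩
  have hσge : ∀ x : Fin n, m ≤ (x : ℕ) → (σ x : ℕ) = n + m - 1 - (x : ℕ) ∧ m ≤ (σ x : ℕ) := by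
    intro x hx
    have := hσ x
    rw [if_neg (by omega)] at this
    have hxn := x.isLt
    exact ⟨this, by omega⟩
  set p := (Finset.univ.filter (fun i : Fin ℓ => ((e i : Fin n) : ℕ) < m)).card with hpdef
  have hple : p ≤ ℓ := by
    calc p ≤ Finset.univ.card := Finset.card_filter_le _ _
    _ = ℓ := by simp
  have hkey : ∀ i : Fin ℓ, ((e i : Fin n) : ℕ) < m ↔ (i : ℕ) < p := by
    intro i
    refine count_lower (fun i : Fin ℓ => ((e i : Fin n) : ℕ) < m) (fun {i j} hij hj => ?_) i
    have : e i ≤ e j := e.monotone hij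
    have : ((e i : Fin n) : ℕ) ≤ ((e j : Fin n) : ℕ) := this
    omega
  have hF1 : ∀ j : Fin ℓ, (j : ℕ) < p → p - 1 - (j : ℕ) < ℓ := fun j hj => by omega
  have hF2 : ∀ j : Fin ℓ, ¬ (j : ℕ) < p → ℓ + p - 1 - (j : ℕ) < ℓ := fun j hj => by
    have := j.isLt; omega
  set F : Fin ℓ → Fin ℓ := fun j =>
    if hc : (j : ℕ) < p then ⟨p - 1 - (j : ℕ), hF1 j hc⟩ else ⟨ℓ + p - 1 - (j : ℕ), hF2 j hc⟩
    with hFdef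
  have hFval : ∀ j : Fin ℓ, (F j : ℕ) =
      if (j : ℕ) < p then p - 1 - (j : ℕ) else ℓ + p - 1 - (j : ℕ) := by
    intro j
    by_cases hc : (j : ℕ) < p <;> simp [hFdef, hc]
  have hFlt : ∀ j : Fin ℓ, ((F j : Fin ℓ) : ℕ) < p ↔ (j : ℕ) < p := by
    intro j
    have hj := j.isLt
    rw [hFval j]
    by_cases hc : (j : ℕ) < p
    · rw [if_pos hc]; omega
    · rw [if_neg hc]; omega
  have hFF : ∀ j : Fin ℓ, F (F j) = j := by
    intro j
    have hj := j.isLt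
    apply Fin.ext
    have h1 := hFval j
    have h2 := hFval (F j)
    by_cases hc : (j : ℕ) < p
    · rw [if_pos hc] at h1
      rw [if_pos ((hFlt j).mpr hc)] at h2
      omega
    · rw [if_neg hc] at h1
      rw [if_neg (fun hx => hc ((hFlt j).mp hx))] at h2
      omega
  set G : Fin ℓ → Fin n := fun j => σ (e (F j)) with hGdef
  have hGmono : StrictMono G := by
    intro j₁ j₂ hjj
    have hj1 := j₁.isLt
    have hj2 := j₂.isLt
    have hjj' : (j₁ : ℕ) < (j₂ : ℕ) := hjj
    simp only [hGdef]
    rw [← Fin.lt_def] at *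
    show (σ (e (F j₁)) : ℕ) < (σ (e (F j₂)) : ℕ)
    by_cases hc2 : (j₂ : ℕ) < p
    · -- both < p
      have hc1 : (j₁ : ℕ) < p := by omega
      have hmem1 : ((e (F j₁) : Fin n) : ℕ) < m := (hkey _).mpr (by rw [hFlt]; exact hc1)
      have hmem2 : ((e (F j₂) : Fin n) : ℕ) < m := (hkey _).mpr (by rw [hFlt]; exact hc2)
      have hv1 := (hσlt _ hmem1).1
      have hv2 := (hσlt _ hmem2).1
      have hFlt12 : F j₂ < F j₁ := by
        rw [Fin.lt_def, hFval j₁, hFval j₂, if_pos hc1, if_pos hc2]; omega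
      have : ((e (F j₂) : Fin n) : ℕ) < ((e (F j₁) : Fin n) : ℕ) := e.strictMono hFlt12
      omega
    · by_cases hc1 : (j₁ : ℕ) < p
      · -- j₁ < p ≤ j₂
        have hmem1 : ((e (F j₁) : Fin n) : ℕ) < m := (hkey _).mpr (by rw [hFlt]; exact hc1)
        have hmem2 : ¬ ((e (F j₂) : Fin n) : ℕ) < m := by
          rw [hkey, hFlt]; exact hc2
        have hv1 := (hσlt _ hmem1).2
        have hv2 := (hσge (e (F j₂)) (by omega)).2
        omega
      · -- both ≥ p
        have hmem1 : ¬ ((e (F j₁) : Fin n) : ℕ) < m := by rw [hkey, hFlt]; exact hc1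
        have hmem2 : ¬ ((e (F j₂) : Fin n) : ℕ) < m := by rw [hkey, hFlt]; exact hc2
        have hv1 := (hσge (e (F j₁)) (by omega)).1
        have hv2 := (hσge (e (F j₂)) (by omega)).1
        have hFlt12 : F j₂ < F j₁ := by
          rw [Fin.lt_def, hFval j₁, hFval j₂, if_neg hc1, if_neg hc2]; omega
        have hee : ((e (F j₂) : Fin n) : ℕ) < ((e (F j₁) : Fin n) : ℕ) := e.strictMono hFlt12
        have hen1 := (e (F j₁)).isLt
        have hen2 := (e (F j₂)).isLt
        omega
  have hcard' : (S.image ⇑σ).card = ℓ := by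
    rw [Finset.card_image_of_injective S σ.injective, h]
  have hGimg : ∀ j, G j ∈ S.image ⇑σ := fun j =>
    Finset.mem_image_of_mem _ (Finset.orderEmbOfFin_mem S h (F j))
  have hG : ∀ j, G j = (S.image ⇑σ).orderEmbOfFin hcard' j := by
    intro j
    rw [Finset.orderEmbOfFin_unique hcard' hGimg hGmono]
  refine ⟨p, hple, fun i => ?_⟩
  have hiso : patPermE σ S h i =
      ((S.image ⇑σ).orderIsoOfFin (by rw [Finset.card_image_of_injective S σ.injective, h])).symm
        ⟨σ (S.orderIsoOfFin h i), Finset.mem_image_of_mem _ (S.orderIsoOfFin h i).2⟩ := rfl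
  have hval : patPermE σ S h i = F i := by
    rw [hiso, OrderIso.symm_apply_eq]
    apply Subtype.ext
    show σ (S.orderEmbOfFin h i) = ((S.image ⇑σ).orderEmbOfFin hcard' (F i))
    rw [← hG (F i)]
    show σ (e i) = σ (e (F (F i)))
    rw [hFF i]
  rw [hval]
  exact hFval i


open Fin.CommRing

lemma fin_refl_val {ℓ : ℕ} [NeZero ℓ] (hℓ : 3 ≤ ℓ) (p : ℕ) (hp : p ≤ ℓ) (i : Fin ℓ) :
    (((p : Fin ℓ) - 1 - i) : Fin ℓ).val =
      if (i : ℕ) < p then p - 1 - (i : ℕ) else ℓ + p - 1 - (i : ℕ) := by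
  have hi := i.isLt
  have h1 : (1 : Fin ℓ).val = 1 := by
    rw [Fin.val_one']; exact Nat.mod_eq_of_lt (by omega)
  rw [Fin.sub_def, Fin.sub_def]
  simp only [Fin.val_natCast, h1]
  rcases eq_or_lt_of_le hp with heq | hplt
  · subst heq
    rw [Nat.mod_self]
    rw [Nat.mod_eq_of_lt (a := p - 1 + 0) (by omega)]
    rw [Nat.mod_eq_sub_mod (by omega)]
    rw [(by omega : p - (i:ℕ) + (p - 1 + 0) - p = p - 1 - (i:ℕ))]
    rw [Nat.mod_eq_of_lt (a := p - 1 - (i:ℕ)) (by omega)]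
    rw [if_pos hi]
  · rw [Nat.mod_eq_of_lt (a := p) hplt]
    rcases Nat.eq_zero_or_pos p with rfl | hppos
    · rw [Nat.mod_eq_of_lt (a := ℓ - 1 + 0) (by omega)]
      rw [Nat.mod_eq_sub_mod (by omega)]
      rw [(by omega : ℓ - (i:ℕ) + (ℓ - 1 + 0) - ℓ = ℓ - 1 - (i:ℕ))]
      rw [Nat.mod_eq_of_lt (a := ℓ - 1 - (i:ℕ)) (by omega)]
      rw [if_neg (by omega : ¬ (i:ℕ) < 0)]
      omega
    · rw [Nat.mod_eq_sub_mod (a := ℓ - 1 + p) (by omega)]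
      rw [(by omega : ℓ - 1 + p - ℓ = p - 1)]
      rw [Nat.mod_eq_of_lt (a := p - 1) (by omega)]
      by_cases hip : (i : ℕ) < p
      · rw [if_pos hip]
        rw [Nat.mod_eq_sub_mod (by omega)]
        rw [(by omega : ℓ - (i:ℕ) + (p - 1) - ℓ = p - 1 - (i:ℕ))]
        rw [Nat.mod_eq_of_lt (a := p - 1 - (i:ℕ)) (by omega)]
      · rw [if_neg hip]
        rw [Nat.mod_eq_of_lt (a := ℓ - (i:ℕ) + (p - 1)) (by omega)]
        omega

/-- The subgroup of rotations `i ↦ c + i` of `Fin ℓ`. -/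
def rotGroup (ℓ : ℕ) [NeZero ℓ] : Subgroup (Equiv.Perm (Fin ℓ)) where
  carrier := {τ | ∃ c : Fin ℓ, ∀ i, τ i = c + i}
  one_mem' := ⟨0, fun i => by simp⟩
  mul_mem' := by
    rintro x y ⟨c, hc⟩ ⟨d, hd⟩
    exact ⟨c + d, fun i => by
      rw [Equiv.Perm.mul_apply, hd, hc, add_assoc]⟩
  inv_mem' := by
    rintro x ⟨c, hc⟩
    refine ⟨-c, fun i => ?_⟩
    have hx : x (-c + i) = i := by rw [hc]; ring
    calc x⁻¹ i = x⁻¹ (x (-c + i)) := by rw [hx]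
    _ = -c + i := x.symm_apply_apply _

/-- let `3 ≤ ℓ ≤ n - 1` and let `σ ∈ Sₙ` be the direct sum of descending
permutations `ι_m ⊕ ι_{n-m}` for some `0 ≤ m ≤ n - 1` (in 0-indexed terms,
`σ(i) = m - 1 - i` for `i < m` and `σ(i) = n + m - 1 - i` for `i ≥ m`).
Then `⟨Δ Pat^ℓ(σ)⟩ ∩ Pat^ℓ(σ) = ∅`, i.e., `σ` is `ℓ`-differentiating. -/
theorem stmt19 {n ℓ m : ℕ} (hl : 3 ≤ ℓ) (hln : ℓ ≤ n - 1) (hm : m ≤ n - 1)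
    (σ : Equiv.Perm (Fin n))
    (hσ : ∀ i : Fin n,
      (σ i : ℕ) = if (i : ℕ) < m then m - 1 - (i : ℕ) else n + m - 1 - (i : ℕ)) :
    ↑(Subgroup.closure (deltaSet (PatSet ℓ σ))) ∩ PatSet ℓ σ =
      (∅ : Set (Equiv.Perm (Fin ℓ))) := by
  haveI : NeZero ℓ := ⟨by omega⟩
  have hn4 : 4 ≤ n := by omega
  have hrefl : ∀ τ ∈ PatSet ℓ σ, ∃ c : Fin ℓ, ∀ i, τ i = c - i := by
    rintro τ ⟨S, hS, rfl⟩
    obtain ⟨p, hp, hval⟩ := pat_formula (by omega) (by omega) σ hσ S hS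
    refine ⟨(p : Fin ℓ) - 1, fun i => Fin.ext ?_⟩
    rw [hval i]
    exact (fin_refl_val hl p hp i).symm
  have hdelta : deltaSet (PatSet ℓ σ) ⊆ ↑(rotGroup ℓ) := by
    rintro g ⟨x, hx, y, hy, rfl⟩
    obtain ⟨c, hcx⟩ := hrefl x hx
    obtain ⟨d, hdy⟩ := hrefl y hy
    refine ⟨c - d, fun i => ?_⟩
    have hxx : x ((c - d) + i) = y i := by rw [hcx, hdy]; ring
    calc (x⁻¹ * y) i = x⁻¹ (y i) := rfl
    _ = x⁻¹ (x ((c - d) + i)) := by rw [hxx]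
    _ = (c - d) + i := x.symm_apply_apply _
  rw [Set.eq_empty_iff_forall_notMem]
  rintro τ ⟨hcl, hpat⟩
  have hτrot : τ ∈ rotGroup ℓ :=
    (Subgroup.closure_le (rotGroup ℓ)).mpr hdelta (SetLike.mem_coe.mp hcl)
  obtain ⟨c, hc⟩ := hτrot
  obtain ⟨d, hd⟩ := hrefl τ hpat
  have h0 : c + 0 = d - 0 := by rw [← hc 0, ← hd 0]
  have h1 : c + 1 = d - 1 := by rw [← hc 1, ← hd 1]
  have h2 : (2 : Fin ℓ) = 0 := by linear_combination h1 - h0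
  have h2v : ((2 : Fin ℓ) : ℕ) = 2 := by
    have : ((2 : Fin ℓ)) = ((2 : ℕ) : Fin ℓ) := by norm_cast
    rw [this, Fin.val_natCast]
    exact Nat.mod_eq_of_lt (by omega)
  rw [h2] at h2v
  simp at h2v
end
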